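/- Let u = √3·(2^{−n})_{n≥1} ∈ ℓ², a unit vector, and let H = u^⊥ ⊆ ℓ², regarded as a Hilbert space of functions on ℕ. Then every multiplier of H is constant: if ψ : ℕ → ℂ satisfies ψ·x ∈ H for all x ∈ H, then ψ(n) = ψ(1) for all n. -/

import Mathlib

/-- Let `u = √3·(2^{−n})_{n≥1}` (here indexed by `ℕ`, `u n = √3/2^{n+1}`),
a unit vector of `ℓ²`, and `H = u^⊥`. Every multiplier of `H` is constant: if
`ψ : ℕ → ℂ` is such that for each `x ∈ H` the pointwise product `ψ·x` is again an
element of `H`, then `ψ n = ψ 0` for all `n`. -/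
theorem stmt17 (u : lp (fun _ : ℕ => ℂ) 2)
    (hu : ∀ n : ℕ, u n = ((Real.sqrt 3 / 2 ^ (n + 1) : ℝ) : ℂ))
    (ψ : ℕ → ℂ)
    (hmul : ∀ x : lp (fun _ : ℕ => ℂ) 2, (inner ℂ u x : ℂ) = 0 →
      ∃ y : lp (fun _ : ℕ => ℂ) 2, (∀ n, y n = ψ n * x n) ∧ (inner ℂ u y : ℂ) = 0) :
    ∀ n : ℕ, ψ n = ψ 0 := by
  intro n
  rcases Nat.eq_zero_or_pos n with rfl | hn
  · rfl
  have hn0 : n ≠ 0 := hn.ne'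
  set x : lp (fun _ : ℕ => ℂ) 2 :=
    lp.single 2 0 (1 : ℂ) + lp.single 2 n (-(2 ^ n) : ℂ) with hx
  have hx0 : x 0 = 1 := by
    have h1 : lp.single 2 (E := fun _ : ℕ => ℂ) 0 (1 : ℂ) 0 = 1 :=
      lp.single_apply_self 2 0 1
    have h2 : lp.single 2 (E := fun _ : ℕ => ℂ) n (-(2 ^ n) : ℂ) 0 = 0 :=
      lp.single_apply_ne 2 n _ (Ne.symm hn0)
    rw [hx, lp.coeFn_add, Pi.add_apply, h1, h2, add_zero]
  have hxn : x n = -(2 ^ n) := by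
    have h1 : lp.single 2 (E := fun _ : ℕ => ℂ) 0 (1 : ℂ) n = 0 :=
      lp.single_apply_ne 2 0 _ hn0
    have h2 : lp.single 2 (E := fun _ : ℕ => ℂ) n (-(2 ^ n) : ℂ) n = -(2 ^ n) :=
      lp.single_apply_self 2 n _
    rw [hx, lp.coeFn_add, Pi.add_apply, h1, h2, zero_add]
  have key : ∀ (a b : ℂ),
      (inner ℂ u (lp.single 2 0 a + lp.single 2 n b) : ℂ)
        = (starRingEnd ℂ) (u 0) * a + (starRingEnd ℂ) (u n) * b := by
    intro a b
    rw [inner_add_right, lp.inner_single_right, lp.inner_single_right]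
    rw [RCLike.inner_apply, RCLike.inner_apply]; ring
  have hu0 : (starRingEnd ℂ) (u 0) = ((Real.sqrt 3 / 2 : ℝ) : ℂ) := by
    rw [hu 0, Complex.conj_ofReal]; norm_num
  have hun : (starRingEnd ℂ) (u n) = ((Real.sqrt 3 / 2 ^ (n + 1) : ℝ) : ℂ) := by
    rw [hu n, Complex.conj_ofReal]
  have h2n : ((2 : ℂ)) ^ n ≠ 0 := pow_ne_zero _ two_ne_zero
  have h2n1 : ((2 : ℂ)) ^ (n + 1) ≠ 0 := pow_ne_zero _ two_ne_zero
  have hxorth : (inner ℂ u x : ℂ) = 0 := by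
    rw [hx, key, hu0, hun]
    push_cast
    rw [pow_succ]
    field_simp
    ring
  obtain ⟨y, hy, hyorth⟩ := hmul x hxorth
  have hyeq : y = lp.single 2 0 (ψ 0 * 1) + lp.single 2 n (ψ n * (-(2 ^ n))) := by
    ext k
    rw [lp.coeFn_add, Pi.add_apply, hy k]
    rcases eq_or_ne k 0 with rfl | hk0
    · rw [hx0, lp.single_apply_self, lp.single_apply_ne 2 n _ (Ne.symm hn0), add_zero]
    rcases eq_or_ne k n with rfl | hkn
    · rw [hxn, lp.single_apply_self, lp.single_apply_ne 2 0 _ hk0, zero_add]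
    · have hxk : x k = 0 := by
        rw [hx, lp.coeFn_add, Pi.add_apply, lp.single_apply_ne 2 0 _ hk0,
          lp.single_apply_ne 2 n _ hkn, add_zero]
      rw [hxk, mul_zero, lp.single_apply_ne 2 0 _ hk0, lp.single_apply_ne 2 n _ hkn, add_zero]
  rw [hyeq, key, hu0, hun] at hyorth
  have sqrt3 : (Real.sqrt 3 : ℝ) ≠ 0 := by positivity
  have hs : ((Real.sqrt 3 : ℝ) : ℂ) ≠ 0 := by exact_mod_cast sqrt3
  push_cast at hyorth
  rw [pow_succ] at hyorth
  field_simp at hyorth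
  have hne : ((Real.sqrt 3 : ℝ) : ℂ) * (2 : ℂ) ^ n * 2 ≠ 0 := by
    exact mul_ne_zero (mul_ne_zero hs h2n) two_ne_zero
  have hsub : (((Real.sqrt 3 : ℝ) : ℂ) * (2 : ℂ) ^ n * 2) * (ψ n - ψ 0) = 0 := by
    linear_combination (-(2:ℂ)^n * 2) * hyorth
  rcases mul_eq_zero.mp hsub with h | h
  · exact absurd h hne
  · exact sub_eq_zero.mp h
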